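/- Let S be a nonempty compact subset of ℝ^D, P a Borel probability measure on S, and ε > 0. Then the operator T_ε, defined by T_ε f(x) = (∫_S Q_ε(x,x') f(x') dP(x')) / m_ε(x), is a well-defined bounded linear operator from L²(S,P) to L²(S,P) which is a compact operator; moreover it is symmetric with respect to the weighted pairing induced by m_ε, i.e. for all f, g ∈ L²(S,P), ∫_S (T_ε f)(x) g(x) m_ε(x) dP(x) = ∫_S f(x) (T_ε g)(x) m_ε(x) dP(x). -/

import Mathlib

open MeasureTheory

noncomputable section

/-- The Gaussian-like kernel `k_ε(x,y) = exp(-‖x-y‖²/(4ε²))`. -/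
def gaussKer {D : ℕ} (ε : ℝ) (x y : EuclideanSpace ℝ (Fin D)) : ℝ :=
  Real.exp (-‖x - y‖ ^ 2 / (4 * ε ^ 2))

/-- The degree function `d_ε(x) = ∫ k_ε(x,x') dP(x')`. -/
def degFun {D : ℕ} (ε : ℝ) (μ : Measure (EuclideanSpace ℝ (Fin D)))
    (x : EuclideanSpace ℝ (Fin D)) : ℝ :=
  ∫ y, gaussKer ε x y ∂μ

/-- The normalized kernel `Q_ε(x,x') = k_ε(x,x')/(d_ε(x) d_ε(x'))`. -/
def Qker {D : ℕ} (ε : ℝ) (μ : Measure (EuclideanSpace ℝ (Fin D)))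
    (x y : EuclideanSpace ℝ (Fin D)) : ℝ :=
  gaussKer ε x y / (degFun ε μ x * degFun ε μ y)

/-- The normalization `m_ε(x) = ∫ Q_ε(x,x') dP(x')`. -/
def mFun {D : ℕ} (ε : ℝ) (μ : Measure (EuclideanSpace ℝ (Fin D)))
    (x : EuclideanSpace ℝ (Fin D)) : ℝ :=
  ∫ y, Qker ε μ x y ∂μ

/-- The operator `T_ε f(x) = (∫ Q_ε(x,x') f(x') dP(x')) / m_ε(x)`. -/
def Tfun {D : ℕ} (ε : ℝ) (μ : Measure (EuclideanSpace ℝ (Fin D)))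
    (f : EuclideanSpace ℝ (Fin D) → ℝ) (x : EuclideanSpace ℝ (Fin D)) : ℝ :=
  (∫ y, Qker ε μ x y * f y ∂μ) / mFun ε μ x

section Aux

variable {D : ℕ} {ε : ℝ} {μ : Measure (EuclideanSpace ℝ (Fin D))}
  {S : Set (EuclideanSpace ℝ (Fin D))} {x y : EuclideanSpace ℝ (Fin D)}

lemma gaussKer_pos : 0 < gaussKer ε x y := Real.exp_pos _

lemma gaussKer_le_one : gaussKer ε x y ≤ 1 := by
  apply Real.exp_le_one_iff.mpr
  apply div_nonpos_of_nonpos_of_nonneg (neg_nonpos.mpr (by positivity)) (by positivity)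

lemma gaussKer_symm : gaussKer ε x y = gaussKer ε y x := by
  simp [gaussKer, norm_sub_rev]

lemma gaussKer_continuous : Continuous fun p : EuclideanSpace ℝ (Fin D) × EuclideanSpace ℝ (Fin D) => gaussKer ε p.1 p.2 := by
  unfold gaussKer; fun_prop

lemma gaussKer_ge (hε : 0 < ε) {r : ℝ} (h : ‖x - y‖ ≤ r) :
    Real.exp (-r ^ 2 / (4 * ε ^ 2)) ≤ gaussKer ε x y := by
  apply Real.exp_le_exp.mpr
  have h2 : ‖x - y‖ ^ 2 ≤ r ^ 2 := by
    have := norm_nonneg (x - y); nlinarith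
  have h4 : (0:ℝ) < 4 * ε ^ 2 := by positivity
  gcongr


lemma gaussKer_cont_right : Continuous (gaussKer ε x) := by
  unfold gaussKer; fun_prop

lemma integrable_gaussKer [IsFiniteMeasure μ] : Integrable (gaussKer ε x) μ :=
  (integrable_const 1).mono' gaussKer_cont_right.aestronglyMeasurable
    (Filter.Eventually.of_forall fun y => by
      rw [Real.norm_eq_abs, abs_of_pos gaussKer_pos]; exact gaussKer_le_one)

lemma degFun_le_one [IsProbabilityMeasure μ] : degFun ε μ x ≤ 1 := by
  have := integral_mono (integrable_gaussKer (μ := μ)) (integrable_const 1)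
    (fun y => (gaussKer_le_one : gaussKer ε x y ≤ 1))
  simpa [degFun] using this

lemma degFun_continuous [IsFiniteMeasure μ] : Continuous (degFun ε μ) := by
  rw [continuous_iff_continuousAt]
  intro x
  apply continuousAt_of_dominated (bound := fun _ => (1:ℝ))
  · exact .of_forall fun x' => gaussKer_cont_right.aestronglyMeasurable
  · exact .of_forall fun x' => .of_forall fun y => by
      rw [Real.norm_eq_abs, abs_of_pos gaussKer_pos]; exact gaussKer_le_one
  · exact integrable_const 1
  · exact .of_forall fun y => (Continuous.continuousAt (by unfold gaussKer; fun_prop))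

lemma ae_mem_S (hμS : μ Sᶜ = 0) : ∀ᵐ y ∂μ, y ∈ S := mem_ae_iff.mpr hμS

lemma le_degFun [IsProbabilityMeasure μ] (hμS : μ Sᶜ = 0) {c : ℝ}
    (h : ∀ y ∈ S, c ≤ gaussKer ε x y) : c ≤ degFun ε μ x := by
  have hge : ∀ᵐ y ∂μ, c ≤ gaussKer ε x y := by
    filter_upwards [ae_mem_S hμS] with y hy using h y hy
  have := integral_mono_ae (integrable_const c) (integrable_gaussKer (μ := μ)) hge
  simpa [degFun] using this

lemma degFun_pos [IsProbabilityMeasure μ] (hμS : μ Sᶜ = 0) (hε : 0 < ε)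
    {x₀ : EuclideanSpace ℝ (Fin D)} {r : ℝ} (hSr : S ⊆ Metric.closedBall x₀ r)
    (x : EuclideanSpace ℝ (Fin D)) : 0 < degFun ε μ x := by
  refine lt_of_lt_of_le (Real.exp_pos (-(‖x - x₀‖ + r) ^ 2 / (4 * ε ^ 2)))
    (le_degFun hμS fun y hy => gaussKer_ge hε ?_)
  have h1 : dist x y ≤ dist x x₀ + dist x₀ y := dist_triangle x x₀ y
  have h2 : dist x₀ y ≤ r := by rw [dist_comm]; exact Metric.mem_closedBall.mp (hSr hy)
  rw [← dist_eq_norm, ← dist_eq_norm] at *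
  linarith

variable {c₀ : ℝ}

lemma Qker_symm : Qker ε μ x y = Qker ε μ y x := by
  rw [Qker, Qker, gaussKer_symm, mul_comm]

lemma Qker_pos (hd : ∀ z, 0 < degFun ε μ z) : 0 < Qker ε μ x y :=
  div_pos gaussKer_pos (mul_pos (hd x) (hd y))

lemma Qker_le_of (hc₀ : 0 < c₀) {c₁ : ℝ} (hc₁ : 0 < c₁)
    (h1 : c₀ ≤ degFun ε μ x) (h2 : c₁ ≤ degFun ε μ y) :
    Qker ε μ x y ≤ (c₀ * c₁)⁻¹ := by
  rw [Qker, ← one_div]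
  exact div_le_div₀ zero_le_one gaussKer_le_one (by positivity)
    (mul_le_mul h1 h2 hc₁.le (lt_of_lt_of_le hc₀ h1).le)

lemma Qker_cont (hd : ∀ z, 0 < degFun ε μ z) [IsFiniteMeasure μ] :
    Continuous fun p : EuclideanSpace ℝ (Fin D) × EuclideanSpace ℝ (Fin D) => Qker ε μ p.1 p.2 := by
  have h : Continuous (degFun ε μ) := degFun_continuous
  unfold Qker
  exact gaussKer_continuous.div ((h.comp continuous_fst).mul (h.comp continuous_snd))
    fun p => (mul_pos (hd p.1) (hd p.2)).ne'

lemma Qker_cont_right (hd : ∀ z, 0 < degFun ε μ z) [IsFiniteMeasure μ] :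
    Continuous (Qker ε μ x) := by
  unfold Qker
  exact gaussKer_cont_right.div (continuous_const.mul degFun_continuous)
    fun y => (mul_pos (hd x) (hd y)).ne'

lemma integrable_Qker [IsProbabilityMeasure μ] (hd : ∀ z, 0 < degFun ε μ z)
    (hμS : μ Sᶜ = 0) (hc₀ : 0 < c₀) (hc : ∀ z ∈ S, c₀ ≤ degFun ε μ z) :
    Integrable (Qker ε μ x) μ := by
  refine (integrable_const ((degFun ε μ x * c₀)⁻¹)).mono'
    (Qker_cont_right hd).aestronglyMeasurable ?_
  filter_upwards [ae_mem_S hμS] with y hy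
  rw [Real.norm_eq_abs, abs_of_pos (Qker_pos hd)]
  exact Qker_le_of (hd x) hc₀ le_rfl (hc y hy)

lemma degFun_le_mFun [IsProbabilityMeasure μ] (hd : ∀ z, 0 < degFun ε μ z)
    (hμS : μ Sᶜ = 0) (hc₀ : 0 < c₀) (hc : ∀ z ∈ S, c₀ ≤ degFun ε μ z) :
    degFun ε μ x ≤ mFun ε μ x := by
  refine integral_mono (integrable_gaussKer (μ := μ)) (integrable_Qker hd hμS hc₀ hc) fun y => ?_
  rw [Qker]
  calc gaussKer ε x y = gaussKer ε x y / 1 := (div_one _).symm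
    _ ≤ _ := by
        apply div_le_div_of_nonneg_left gaussKer_pos.le (mul_pos (hd x) (hd y))
        exact mul_le_one₀ degFun_le_one (hd y).le degFun_le_one

lemma mFun_pos [IsProbabilityMeasure μ] (hd : ∀ z, 0 < degFun ε μ z)
    (hμS : μ Sᶜ = 0) (hc₀ : 0 < c₀) (hc : ∀ z ∈ S, c₀ ≤ degFun ε μ z) :
    0 < mFun ε μ x :=
  lt_of_lt_of_le (hd x) (degFun_le_mFun hd hμS hc₀ hc)

lemma mFun_le [IsProbabilityMeasure μ] (hd : ∀ z, 0 < degFun ε μ z)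
    (hμS : μ Sᶜ = 0) (hc₀ : 0 < c₀) (hc : ∀ z ∈ S, c₀ ≤ degFun ε μ z) (hx : x ∈ S) :
    mFun ε μ x ≤ (c₀ * c₀)⁻¹ := by
  have := integral_mono_ae (integrable_Qker (x := x) hd hμS hc₀ hc)
    (integrable_const ((c₀ * c₀)⁻¹)) ?_
  · simpa [mFun] using this
  · filter_upwards [ae_mem_S hμS] with y hy
    exact Qker_le_of hc₀ hc₀ (hc x hx) (hc y hy)

section Tfun
variable {f g : EuclideanSpace ℝ (Fin D) → ℝ}

lemma integrable_Qker_mul [IsProbabilityMeasure μ] (hd : ∀ z, 0 < degFun ε μ z)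
    (hμS : μ Sᶜ = 0) (hc₀ : 0 < c₀) (hc : ∀ z ∈ S, c₀ ≤ degFun ε μ z)
    (hf : Integrable f μ) : Integrable (fun y => Qker ε μ x y * f y) μ := by
  refine ((hf.norm.const_mul ((degFun ε μ x * c₀)⁻¹)).mono'
    ((Qker_cont_right hd).aestronglyMeasurable.mul hf.1) ?_)
  filter_upwards [ae_mem_S hμS] with y hy
  rw [norm_mul, Real.norm_eq_abs (Qker ε μ x y), abs_of_pos (Qker_pos hd)]
  exact mul_le_mul_of_nonneg_right (Qker_le_of (hd x) hc₀ le_rfl (hc y hy)) (norm_nonneg _)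

lemma Tfun_congr (h : f =ᵐ[μ] g) : Tfun ε μ f = Tfun ε μ g := by
  funext x
  unfold Tfun
  rw [integral_congr_ae (h.mono fun y hy => by rw [hy])]

lemma Tfun_add [IsProbabilityMeasure μ] (hd : ∀ z, 0 < degFun ε μ z)
    (hμS : μ Sᶜ = 0) (hc₀ : 0 < c₀) (hc : ∀ z ∈ S, c₀ ≤ degFun ε μ z)
    (hf : Integrable f μ) (hg : Integrable g μ) :
    Tfun ε μ (f + g) = Tfun ε μ f + Tfun ε μ g := by
  funext x
  have h1 : (∫ y, Qker ε μ x y * (f y + g y) ∂μ)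
      = (∫ y, Qker ε μ x y * f y ∂μ) + ∫ y, Qker ε μ x y * g y ∂μ := by
    rw [← integral_add (integrable_Qker_mul hd hμS hc₀ hc hf)
      (integrable_Qker_mul hd hμS hc₀ hc hg)]
    congr 1; funext y; simp [mul_add]
  simp only [Tfun, Pi.add_apply, h1, add_div]

lemma Tfun_smul (c : ℝ) : Tfun ε μ (c • f) = c • Tfun ε μ f := by
  funext x
  have h1 : (∫ y, Qker ε μ x y * (c * f y) ∂μ) = c * ∫ y, Qker ε μ x y * f y ∂μ := by
    rw [← integral_const_mul]
    congr 1; funext y; ring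
  simp only [Tfun, Pi.smul_apply, smul_eq_mul, h1, mul_div_assoc]

lemma mFun_continuous [IsProbabilityMeasure μ] (hd : ∀ z, 0 < degFun ε μ z)
    (hμS : μ Sᶜ = 0) (hc₀ : 0 < c₀) (hc : ∀ z ∈ S, c₀ ≤ degFun ε μ z) :
    Continuous (mFun ε μ) := by
  rw [continuous_iff_continuousAt]
  intro x
  have hev : ∀ᶠ x' in nhds x, degFun ε μ x / 2 < degFun ε μ x' :=
    (degFun_continuous.tendsto x).eventually (eventually_gt_nhds (half_lt_self (hd x)))
  apply continuousAt_of_dominated (bound := fun _ => (degFun ε μ x / 2 * c₀)⁻¹)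
  · exact .of_forall fun x' => (Qker_cont_right hd).aestronglyMeasurable
  · filter_upwards [hev] with x' hx'
    filter_upwards [ae_mem_S hμS] with y hy
    rw [Real.norm_eq_abs, abs_of_pos (Qker_pos hd)]
    exact Qker_le_of (half_pos (hd x)) hc₀ hx'.le (hc y hy)
  · exact integrable_const _
  · refine .of_forall fun y => Continuous.continuousAt ?_
    unfold Qker
    exact (Continuous.div (by unfold gaussKer; fun_prop)
      (degFun_continuous.mul continuous_const)
      fun x' => (mul_pos (hd x') (hd y)).ne')
lemma Tfun_aesm [IsProbabilityMeasure μ] (hd : ∀ z, 0 < degFun ε μ z)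
    (hμS : μ Sᶜ = 0) (hc₀ : 0 < c₀) (hc : ∀ z ∈ S, c₀ ≤ degFun ε μ z)
    (hf : AEStronglyMeasurable f μ) : AEStronglyMeasurable (Tfun ε μ f) μ := by
  have hnum : AEStronglyMeasurable (fun x => ∫ y, Qker ε μ x y * f y ∂μ) μ := by
    apply MeasureTheory.AEStronglyMeasurable.integral_prod_right'
      (f := fun p : _ × _ => Qker ε μ p.1 p.2 * f p.2)
    exact (Qker_cont hd).aestronglyMeasurable.mul hf.comp_snd
  have hm : Continuous (fun x => (mFun ε μ x)⁻¹) :=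
    (mFun_continuous hd hμS hc₀ hc).inv₀ fun x => (mFun_pos hd hμS hc₀ hc).ne'
  have heq : Tfun ε μ f = fun x => (∫ y, Qker ε μ x y * f y ∂μ) * (mFun ε μ x)⁻¹ := by
    funext x; rw [Tfun, div_eq_mul_inv]
  rw [heq]
  exact hnum.mul hm.aestronglyMeasurable

end Tfun

section Bound
variable {f g : EuclideanSpace ℝ (Fin D) → ℝ}

lemma norm_integral_Qf_le [IsProbabilityMeasure μ] (hd : ∀ z, 0 < degFun ε μ z)
    (hμS : μ Sᶜ = 0) (hc₀ : 0 < c₀) (hc : ∀ z ∈ S, c₀ ≤ degFun ε μ z)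
    (hx : x ∈ S) (hf : Integrable f μ) :
    ‖∫ y, Qker ε μ x y * f y ∂μ‖ ≤ (c₀ * c₀)⁻¹ * ∫ y, ‖f y‖ ∂μ := by
  rw [← integral_const_mul]
  refine norm_integral_le_of_norm_le (hf.norm.const_mul _) ?_
  filter_upwards [ae_mem_S hμS] with y hy
  rw [norm_mul, Real.norm_eq_abs (Qker ε μ x y), abs_of_pos (Qker_pos hd)]
  exact mul_le_mul_of_nonneg_right (Qker_le_of hc₀ hc₀ (hc x hx) (hc y hy)) (norm_nonneg _)

lemma Tfun_norm_le [IsProbabilityMeasure μ] (hd : ∀ z, 0 < degFun ε μ z)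
    (hμS : μ Sᶜ = 0) (hc₀ : 0 < c₀) (hc : ∀ z ∈ S, c₀ ≤ degFun ε μ z)
    (hx : x ∈ S) (hf : Integrable f μ) :
    ‖Tfun ε μ f x‖ ≤ (c₀ * c₀)⁻¹ / c₀ * ∫ y, ‖f y‖ ∂μ := by
  have hm : c₀ ≤ mFun ε μ x := le_trans (hc x hx) (degFun_le_mFun hd hμS hc₀ hc)
  have h1 := norm_integral_Qf_le hd hμS hc₀ hc hx hf
  have h2 : ‖Tfun ε μ f x‖ = ‖∫ y, Qker ε μ x y * f y ∂μ‖ / mFun ε μ x := by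
    rw [Tfun, norm_div, Real.norm_of_nonneg (mFun_pos hd hμS hc₀ hc).le]
  rw [h2]
  calc ‖∫ y, Qker ε μ x y * f y ∂μ‖ / mFun ε μ x
      ≤ ((c₀ * c₀)⁻¹ * ∫ y, ‖f y‖ ∂μ) / c₀ := by
        apply div_le_div₀ (by positivity) h1 hc₀ hm
    _ = (c₀ * c₀)⁻¹ / c₀ * ∫ y, ‖f y‖ ∂μ := by ring

lemma memℒp_Tfun [IsProbabilityMeasure μ] (hd : ∀ z, 0 < degFun ε μ z)
    (hμS : μ Sᶜ = 0) (hc₀ : 0 < c₀) (hc : ∀ z ∈ S, c₀ ≤ degFun ε μ z)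
    (hf : Integrable f μ) : MemLp (Tfun ε μ f) 2 μ := by
  refine MemLp.of_le (memLp_const ((c₀ * c₀)⁻¹ / c₀ * ∫ y, ‖f y‖ ∂μ))
    (Tfun_aesm hd hμS hc₀ hc hf.1) ?_
  filter_upwards [ae_mem_S hμS] with x hx
  have hC : 0 ≤ (c₀ * c₀)⁻¹ / c₀ * ∫ y, ‖f y‖ ∂μ :=
    mul_nonneg (by positivity) (integral_nonneg fun y => norm_nonneg _)
  rw [Real.norm_of_nonneg hC]
  exact Tfun_norm_le hd hμS hc₀ hc hx hf

lemma eLpNorm_Tfun_le [IsProbabilityMeasure μ] (hd : ∀ z, 0 < degFun ε μ z)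
    (hμS : μ Sᶜ = 0) (hc₀ : 0 < c₀) (hc : ∀ z ∈ S, c₀ ≤ degFun ε μ z)
    (hf : Integrable f μ) :
    eLpNorm (Tfun ε μ f) 2 μ ≤ ENNReal.ofReal ((c₀ * c₀)⁻¹ / c₀ * ∫ y, ‖f y‖ ∂μ) := by
  have h := eLpNorm_le_of_ae_bound (p := 2) (μ := μ)
    (f := Tfun ε μ f) (C := (c₀ * c₀)⁻¹ / c₀ * ∫ y, ‖f y‖ ∂μ) ?_
  · simpa [measure_univ] using h
  · filter_upwards [ae_mem_S hμS] with x hx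
    exact Tfun_norm_le hd hμS hc₀ hc hx hf

lemma L2_integrable (F : Lp ℝ 2 μ) [IsProbabilityMeasure μ] : Integrable (F : _ → ℝ) μ :=
  memLp_one_iff_integrable.mp ((Lp.memLp F).mono_exponent (by norm_num))

lemma L2_int_norm_le (F : Lp ℝ 2 μ) [IsProbabilityMeasure μ] :
    ∫ y, ‖F y‖ ∂μ ≤ ‖F‖ := by
  have h1 : ∫ y, ‖F y‖ ∂μ = (eLpNorm (F : _ → ℝ) 1 μ).toReal := by
    rw [integral_norm_eq_lintegral_enorm (Lp.aestronglyMeasurable F),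
      eLpNorm_one_eq_lintegral_enorm]
  rw [h1, Lp.norm_def]
  exact ENNReal.toReal_mono (Lp.eLpNorm_ne_top F)
    (eLpNorm_le_eLpNorm_of_exponent_le (by norm_num) (Lp.aestronglyMeasurable F))
end Bound

section Symm
variable {f g : EuclideanSpace ℝ (Fin D) → ℝ}

lemma ae_prod_mem [IsProbabilityMeasure μ] (hμS : μ Sᶜ = 0) :
    ∀ᵐ p ∂(μ.prod μ), p.1 ∈ S ∧ p.2 ∈ S := by
  rw [ae_iff]
  have hsub : {p : EuclideanSpace ℝ (Fin D) × EuclideanSpace ℝ (Fin D) | ¬(p.1 ∈ S ∧ p.2 ∈ S)}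
      ⊆ (Sᶜ ×ˢ (Set.univ : Set (EuclideanSpace ℝ (Fin D)))) ∪
        ((Set.univ : Set (EuclideanSpace ℝ (Fin D))) ×ˢ Sᶜ) := by
    intro p hp
    simp only [Set.mem_setOf_eq, not_and_or] at hp
    rcases hp with h | h
    · exact Or.inl ⟨h, Set.mem_univ _⟩
    · exact Or.inr ⟨Set.mem_univ _, h⟩
  have hnull : (μ.prod μ) ((Sᶜ ×ˢ (Set.univ : Set (EuclideanSpace ℝ (Fin D)))) ∪
      ((Set.univ : Set (EuclideanSpace ℝ (Fin D))) ×ˢ Sᶜ)) = 0 := by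
    apply measure_union_null <;> rw [Measure.prod_prod] <;> simp [hμS]
  exact measure_mono_null hsub hnull

lemma prod_integrable [IsProbabilityMeasure μ] (hd : ∀ z, 0 < degFun ε μ z)
    (hμS : μ Sᶜ = 0) (hc₀ : 0 < c₀) (hc : ∀ z ∈ S, c₀ ≤ degFun ε μ z)
    (hf : Integrable f μ) (hg : Integrable g μ) :
    Integrable (fun p : EuclideanSpace ℝ (Fin D) × EuclideanSpace ℝ (Fin D) =>
      Qker ε μ p.1 p.2 * f p.2 * g p.1) (μ.prod μ) := by
  refine ((hg.norm.mul_prod hf.norm).const_mul ((c₀ * c₀)⁻¹)).mono'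
    (((Qker_cont hd).aestronglyMeasurable.mul hf.1.comp_snd).mul hg.1.comp_fst) ?_
  filter_upwards [ae_prod_mem hμS] with p hp
  have hQ : Qker ε μ p.1 p.2 ≤ (c₀ * c₀)⁻¹ := Qker_le_of hc₀ hc₀ (hc _ hp.1) (hc _ hp.2)
  have hQ0 : 0 < Qker ε μ p.1 p.2 := Qker_pos hd
  rw [norm_mul, norm_mul, Real.norm_eq_abs (Qker ε μ p.1 p.2), abs_of_pos hQ0]
  have h1 := norm_nonneg (f p.2); have h2 := norm_nonneg (g p.1)
  calc Qker ε μ p.1 p.2 * ‖f p.2‖ * ‖g p.1‖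
      ≤ (c₀ * c₀)⁻¹ * ‖f p.2‖ * ‖g p.1‖ :=
        mul_le_mul_of_nonneg_right (mul_le_mul_of_nonneg_right hQ h1) h2
    _ = (c₀ * c₀)⁻¹ * (‖g p.1‖ * ‖f p.2‖) := by ring

lemma Tfun_symm [IsProbabilityMeasure μ] (hd : ∀ z, 0 < degFun ε μ z)
    (hμS : μ Sᶜ = 0) (hc₀ : 0 < c₀) (hc : ∀ z ∈ S, c₀ ≤ degFun ε μ z)
    (hf : Integrable f μ) (hg : Integrable g μ) :
    ∫ x, Tfun ε μ f x * g x * mFun ε μ x ∂μ = ∫ x, f x * Tfun ε μ g x * mFun ε μ x ∂μ := by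
  have hmne : ∀ x, mFun ε μ x ≠ 0 := fun x => (mFun_pos hd hμS hc₀ hc).ne'
  have step1 : ∫ x, Tfun ε μ f x * g x * mFun ε μ x ∂μ
      = ∫ x, ∫ y, Qker ε μ x y * f y * g x ∂μ ∂μ := by
    refine integral_congr_ae (.of_forall fun x => ?_)
    dsimp only
    have h1 : Tfun ε μ f x * g x * mFun ε μ x = (∫ y, Qker ε μ x y * f y ∂μ) * g x := by
      rw [Tfun, div_mul_eq_mul_div, div_mul_eq_mul_div, mul_div_assoc, div_self (hmne x), mul_one]
    rw [h1, ← integral_mul_const]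
  have step3 : ∫ y, ∫ x, Qker ε μ x y * f y * g x ∂μ ∂μ
      = ∫ y, f y * Tfun ε μ g y * mFun ε μ y ∂μ := by
    refine integral_congr_ae (.of_forall fun y => ?_)
    dsimp only
    have h2 : ∀ x, Qker ε μ x y * f y * g x = (Qker ε μ y x * g x) * f y := fun x => by
      rw [Qker_symm]; ring
    rw [integral_congr_ae (.of_forall h2), integral_mul_const,
      show (∫ x, Qker ε μ y x * g x ∂μ) = Tfun ε μ g y * mFun ε μ y by
        rw [Tfun, div_mul_cancel₀ _ (hmne y)]]
    ring
  rw [step1, integral_integral_swap (prod_integrable hd hμS hc₀ hc hf hg), step3]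
end Symm

section FinRank

lemma isCompactOperator_of_mem_fd {H₁ H₂ : Type*} [NormedAddCommGroup H₁]
    [NormedSpace ℝ H₁] [NormedAddCommGroup H₂] [NormedSpace ℝ H₂]
    (T : H₁ →L[ℝ] H₂) (W : Submodule ℝ H₂) [FiniteDimensional ℝ W]
    (h : ∀ x, T x ∈ W) : IsCompactOperator T := by
  refine ⟨(↑) '' Metric.closedBall (0 : W) ‖T‖,
    ((isCompact_closedBall _ _).image continuous_subtype_val), ?_⟩
  refine Filter.mem_of_superset (Metric.closedBall_mem_nhds (0 : H₁) one_pos) ?_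
  intro x hx
  refine ⟨⟨T x, h x⟩, ?_, rfl⟩
  rw [Metric.mem_closedBall, dist_zero_right]
  calc ‖(⟨T x, h x⟩ : W)‖ = ‖T x‖ := rfl
    _ ≤ ‖T‖ * ‖x‖ := T.le_opNorm x
    _ ≤ ‖T‖ * 1 := by
        have := mem_closedBall_zero_iff.mp hx
        gcongr
    _ = ‖T‖ := mul_one _

lemma Lp_sum_coeFn {E' : Type*} [MeasurableSpace E'] {ν : Measure E'} {ι : Type*}
    (s : Finset ι) (v : ι → Lp ℝ 2 ν) :
    ((∑ i ∈ s, v i : Lp ℝ 2 ν) : E' → ℝ) =ᵐ[ν] fun x => ∑ i ∈ s, (v i : E' → ℝ) x := by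
  classical
  induction s using Finset.induction_on with
  | empty => simp only [Finset.sum_empty]; exact Lp.coeFn_zero ℝ 2 ν
  | insert a s' hni ih =>
      rw [Finset.sum_insert hni]
      filter_upwards [Lp.coeFn_add (v a) (∑ i ∈ s', v i), ih] with x h1 h2
      rw [h1, Finset.sum_insert hni, Pi.add_apply, h2]

end FinRank

section Approx

open ContinuousLinearMap in
lemma exists_finrank_approx [IsProbabilityMeasure μ] (hS : IsCompact S)
    (hd : ∀ z, 0 < degFun ε μ z) (hμS : μ Sᶜ = 0) (hc₀ : 0 < c₀)
    (hc : ∀ z ∈ S, c₀ ≤ degFun ε μ z)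
    (T : Lp ℝ 2 μ →L[ℝ] Lp ℝ 2 μ)
    (hT : ∀ f : Lp ℝ 2 μ, (T f : EuclideanSpace ℝ (Fin D) → ℝ)
      =ᵐ[μ] Tfun ε μ (f : EuclideanSpace ℝ (Fin D) → ℝ))
    {δ : ℝ} (hδ : 0 < δ) :
    ∃ F : Lp ℝ 2 μ →L[ℝ] Lp ℝ 2 μ, IsCompactOperator F ∧ ‖T - F‖ ≤ δ := by
  classical
  have hmpos : ∀ x, 0 < mFun ε μ x := fun x => mFun_pos hd hμS hc₀ hc
  set CB : ℝ := (c₀ * c₀)⁻¹ / c₀ with hCB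
  let K : EuclideanSpace ℝ (Fin D) × EuclideanSpace ℝ (Fin D) → ℝ := fun p => Qker ε μ p.1 p.2 / mFun ε μ p.1
  have hKcont : Continuous K :=
    (Qker_cont hd).div ((mFun_continuous hd hμS hc₀ hc).comp continuous_fst)
      fun p => (hmpos p.1).ne'
  have hKbound : ∀ x ∈ S, ∀ y ∈ S, ‖K (x, y)‖ ≤ CB := by
    intro x hx y hy
    have : K (x, y) = Qker ε μ x y / mFun ε μ x := rfl
    rw [Real.norm_eq_abs, this, abs_of_pos (div_pos (Qker_pos hd) (hmpos x))]
    exact div_le_div₀ (by positivity) (Qker_le_of hc₀ hc₀ (hc x hx) (hc y hy)) hc₀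
      (le_trans (hc x hx) (degFun_le_mFun hd hμS hc₀ hc))
  -- uniform continuity on S ×ˢ S
  have huc := (hS.prod hS).uniformContinuousOn_of_continuous hKcont.continuousOn
  rw [Metric.uniformContinuousOn_iff] at huc
  obtain ⟨η, hη, hmod⟩ := huc δ hδ
  -- finite cover of S by balls of radius η centred in S
  obtain ⟨t, htS, htfin, hcover⟩ :=
    totallyBounded_iff_subset.mp hS.totallyBounded _ (Metric.dist_mem_uniformity hη)
  haveI : Fintype t := htfin.fintype
  set n := Fintype.card t with hn
  let eqv : t ≃ Fin n := Fintype.equivFin t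
  let ξ : Fin n → EuclideanSpace ℝ (Fin D) := fun i => (eqv.symm i : EuclideanSpace ℝ (Fin D))
  have hξS : ∀ i, ξ i ∈ S := fun i => htS (eqv.symm i).2
  let B : ℕ → Set (EuclideanSpace ℝ (Fin D)) := fun k => if h : k < n then Metric.ball (ξ ⟨k, h⟩) η else ∅
  let A : ℕ → Set (EuclideanSpace ℝ (Fin D)) := disjointed B
  have hBmeas : ∀ k, MeasurableSet (B k) := by
    intro k; by_cases h : k < n
    · simp only [B, dif_pos h]; exact measurableSet_ball
    · simp only [B, dif_neg h]; exact MeasurableSet.empty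
  have hAmeas : ∀ k, MeasurableSet (A k) := MeasurableSet.disjointed hBmeas
  have hAsub : ∀ k, A k ⊆ B k := disjointed_subset B
  have hdisj : Pairwise (Function.onFun Disjoint A) := disjoint_disjointed B
  have hScover : ∀ x ∈ S, ∃ k, x ∈ A k := by
    intro x hx
    have h1 : x ∈ ⋃ k, B k := by
      obtain ⟨y, hyt, hxy⟩ := Set.mem_iUnion₂.mp (hcover hx)
      let i : Fin n := eqv ⟨y, hyt⟩
      have hyi : ξ i = y := by simp [ξ, i]
      refine Set.mem_iUnion.mpr ⟨(i : ℕ), ?_⟩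
      have : (i : ℕ) < n := i.isLt
      simp only [B, dif_pos this]
      rw [Metric.mem_ball]
      simpa [hyi] using hxy
    rw [← iUnion_disjointed] at h1
    exact Set.mem_iUnion.mp h1
  -- the finite-rank operator
  let gfun : Fin n → EuclideanSpace ℝ (Fin D) → ℝ := fun i y => K (ξ i, y)
  have hgcont : ∀ i, Continuous (gfun i) := fun i => hKcont.comp (Continuous.prodMk_right (ξ i))
  have hgmem : ∀ i, MemLp (gfun i) 2 μ := by
    intro i
    refine MemLp.of_le (memLp_const CB) (hgcont i).aestronglyMeasurable ?_
    filter_upwards [ae_mem_S hμS] with y hy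
    rw [Real.norm_of_nonneg (le_trans (norm_nonneg _) (hKbound _ (hξS i) _ hy))]
    exact hKbound _ (hξS i) _ hy
  let gL : Fin n → Lp ℝ 2 μ := fun i => (hgmem i).toLp _
  let eL : Fin n → Lp ℝ 2 μ := fun i =>
    indicatorConstLp 2 (hAmeas i) (measure_ne_top μ _) (1 : ℝ)
  let F : Lp ℝ 2 μ →L[ℝ] Lp ℝ 2 μ := ∑ i : Fin n, (innerSL ℝ (gL i)).smulRight (eL i)
  have hFapp : ∀ f : Lp ℝ 2 μ, F f = ∑ i : Fin n, (inner ℝ (gL i) f : ℝ) • eL i := by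
    intro f
    simp only [F, ContinuousLinearMap.sum_apply, ContinuousLinearMap.smulRight_apply,
      innerSL_apply_apply]
  haveI : FiniteDimensional ℝ (Submodule.span ℝ (Set.range eL)) :=
    FiniteDimensional.span_of_finite ℝ (Set.finite_range eL)
  have hFcomp : IsCompactOperator F := by
    refine isCompactOperator_of_mem_fd F (Submodule.span ℝ (Set.range eL)) fun f => ?_
    rw [hFapp f]
    exact Submodule.sum_mem _ fun i _ =>
      Submodule.smul_mem _ _ (Submodule.subset_span (Set.mem_range_self i))
  refine ⟨F, hFcomp, ?_⟩
  -- operator norm bound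
  refine ContinuousLinearMap.opNorm_le_bound _ hδ.le fun f => ?_
  have hfint : Integrable (f : EuclideanSpace ℝ (Fin D) → ℝ) μ := L2_integrable f
  set c : Fin n → ℝ := fun i => ∫ y, gfun i y * (f : EuclideanSpace ℝ (Fin D) → ℝ) y ∂μ with hcdef
  have hinner : ∀ i, (inner ℝ (gL i) f : ℝ) = c i := by
    intro i
    rw [L2.inner_def]
    refine integral_congr_ae ?_
    filter_upwards [(hgmem i).coeFn_toLp] with y hy
    rw [RCLike.inner_apply', conj_trivial]
    rw [show (gL i : EuclideanSpace ℝ (Fin D) → ℝ) y = gfun i y from hy]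
  have hFf : (F f : EuclideanSpace ℝ (Fin D) → ℝ) =ᵐ[μ] fun x =>
      ∑ i : Fin n, c i * Set.indicator (A i) (fun _ => (1 : ℝ)) x := by
    rw [hFapp f]
    have h1 := Lp_sum_coeFn (ν := μ) Finset.univ (fun i => (inner ℝ (gL i) f : ℝ) • eL i)
    have h2 : ∀ᵐ x ∂μ, ∀ i : Fin n, ((inner ℝ (gL i) f : ℝ) • eL i : Lp ℝ 2 μ) x
        = c i * Set.indicator (A i) (fun _ => (1 : ℝ)) x := by
      rw [ae_all_iff]
      intro i
      filter_upwards [Lp.coeFn_smul ((inner ℝ (gL i) f : ℝ)) (eL i),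
        indicatorConstLp_coeFn (p := 2) (hs := hAmeas i) (hμs := measure_ne_top μ _)
          (c := (1:ℝ))] with x hx hx'
      rw [hx, Pi.smul_apply, smul_eq_mul, hinner i, hx']
    filter_upwards [h1, h2] with x hx1 hx2
    rw [hx1]
    exact Finset.sum_congr rfl fun i _ => hx2 i
  have hb : ∀ᵐ x ∂μ, ‖((T - F) f : EuclideanSpace ℝ (Fin D) → ℝ) x‖ ≤ δ * ‖f‖ := by
    have hsub : ((T - F) f : EuclideanSpace ℝ (Fin D) → ℝ) =ᵐ[μ] (T f : EuclideanSpace ℝ (Fin D) → ℝ) - (F f : EuclideanSpace ℝ (Fin D) → ℝ) := by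
      rw [ContinuousLinearMap.sub_apply]
      exact Lp.coeFn_sub (T f) (F f)
    filter_upwards [hsub, hT f, hFf, ae_mem_S hμS] with x hx hTx hFx hxS
    obtain ⟨k, hk⟩ := hScover x hxS
    have hkn : k < n := by
      by_contra h
      have : A k ⊆ ∅ := by
        refine le_trans (hAsub k) ?_
        simp [B, dif_neg h]
      exact this hk
    set i : Fin n := ⟨k, hkn⟩ with hi
    have hxball : x ∈ Metric.ball (ξ i) η := by
      have := hAsub k hk
      simpa only [B, dif_pos hkn] using this
    -- F f x = c i
    have hFx2 : (F f : EuclideanSpace ℝ (Fin D) → ℝ) x = c i := by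
      rw [hFx]
      rw [Finset.sum_eq_single i]
      · rw [Set.indicator_of_mem hk, mul_one]
      · intro j _ hji
        have hdisjij : Disjoint (A (j : ℕ)) (A (k : ℕ)) :=
          hdisj (fun hjk => hji (Fin.ext hjk))
        rw [Set.indicator_of_notMem (Set.disjoint_left.mp hdisjij · hk), mul_zero]
      · intro h; exact absurd (Finset.mem_univ i) h
    -- T f x = ∫ K (x, y) * f y
    have hint1 : Integrable (fun y => K (x, y) * (f : EuclideanSpace ℝ (Fin D) → ℝ) y) μ := by
      have h0 := (integrable_Qker_mul (x := x) hd hμS hc₀ hc hfint).div_const (mFun ε μ x)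
      refine h0.congr (.of_forall fun y => ?_)
      show Qker ε μ x y * (f : EuclideanSpace ℝ (Fin D) → ℝ) y / mFun ε μ x
        = K (x, y) * (f : EuclideanSpace ℝ (Fin D) → ℝ) y
      rw [mul_div_right_comm]
    have hint2 : Integrable (fun y => K (ξ i, y) * (f : EuclideanSpace ℝ (Fin D) → ℝ) y) μ := by
      have h0 := (integrable_Qker_mul (x := ξ i) hd hμS hc₀ hc hfint).div_const (mFun ε μ (ξ i))
      refine h0.congr (.of_forall fun y => ?_)
      show Qker ε μ (ξ i) y * (f : EuclideanSpace ℝ (Fin D) → ℝ) y / mFun ε μ (ξ i)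
        = K (ξ i, y) * (f : EuclideanSpace ℝ (Fin D) → ℝ) y
      rw [mul_div_right_comm]
    have hTx2 : Tfun ε μ (f : EuclideanSpace ℝ (Fin D) → ℝ) x = ∫ y, K (x, y) * (f : EuclideanSpace ℝ (Fin D) → ℝ) y ∂μ := by
      rw [Tfun, ← integral_div]
      exact integral_congr_ae (.of_forall fun y => mul_div_right_comm _ _ _)
    have hci : c i = ∫ y, K (ξ i, y) * (f : EuclideanSpace ℝ (Fin D) → ℝ) y ∂μ := rfl
    rw [hx, Pi.sub_apply, hTx, hFx2, hTx2, hci, ← integral_sub hint1 hint2]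
    have hbd : ‖∫ y, (K (x, y) * (f : EuclideanSpace ℝ (Fin D) → ℝ) y - K (ξ i, y) * (f : EuclideanSpace ℝ (Fin D) → ℝ) y) ∂μ‖
        ≤ δ * ∫ y, ‖(f : EuclideanSpace ℝ (Fin D) → ℝ) y‖ ∂μ := by
      rw [← integral_const_mul]
      refine norm_integral_le_of_norm_le (hfint.norm.const_mul δ) ?_
      filter_upwards [ae_mem_S hμS] with y hyS
      have hmd := hmod (x, y) (Set.mk_mem_prod hxS hyS) (ξ i, y)
        (Set.mk_mem_prod (hξS i) hyS) ?_
      · rw [← sub_mul, norm_mul]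
        refine mul_le_mul_of_nonneg_right ?_ (norm_nonneg _)
        rw [Real.norm_eq_abs, ← Real.dist_eq]
        exact hmd.le
      · rw [Prod.dist_eq]
        simp only [dist_self]
        rw [max_eq_left dist_nonneg]
        exact Metric.mem_ball.mp hxball
    refine le_trans hbd ?_
    have := L2_int_norm_le f
    gcongr
  -- conclude
  rw [show ‖f‖ = dist f 0 from (dist_zero_right f).symm]
  have hnorm : ‖(T - F) f‖ ≤ δ * ‖f‖ := by
    rw [Lp.norm_def]
    refine ENNReal.toReal_le_of_le_ofReal (by positivity) ?_
    have h := eLpNorm_le_of_ae_bound (p := 2) (μ := μ) hb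
    simpa [measure_univ] using h
  simpa [dist_zero_right] using hnorm

end Approx

section Final

lemma isCompactOperator_T [IsProbabilityMeasure μ] (hS : IsCompact S)
    (hd : ∀ z, 0 < degFun ε μ z) (hμS : μ Sᶜ = 0) (hc₀ : 0 < c₀)
    (hc : ∀ z ∈ S, c₀ ≤ degFun ε μ z)
    (T : Lp ℝ 2 μ →L[ℝ] Lp ℝ 2 μ)
    (hT : ∀ f : Lp ℝ 2 μ, (T f : EuclideanSpace ℝ (Fin D) → ℝ)
      =ᵐ[μ] Tfun ε μ (f : EuclideanSpace ℝ (Fin D) → ℝ)) :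
    IsCompactOperator T := by
  have h : ∀ j : ℕ, ∃ F : Lp ℝ 2 μ →L[ℝ] Lp ℝ 2 μ,
      IsCompactOperator F ∧ ‖T - F‖ ≤ ((j : ℝ) + 1)⁻¹ := fun j =>
    exists_finrank_approx hS hd hμS hc₀ hc T hT (by positivity)
  choose F hFc hFle using h
  have htend : Filter.Tendsto F Filter.atTop (nhds T) := by
    rw [tendsto_iff_norm_sub_tendsto_zero]
    refine squeeze_zero (fun j => norm_nonneg _) (fun j => ?_)
      tendsto_one_div_add_atTop_nhds_zero_nat
    rw [norm_sub_rev, one_div]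
    exact hFle j
  exact isCompactOperator_of_tendsto htend (Filter.Eventually.of_forall hFc)

end Final

end Aux

/-- `T_ε` is a well-defined bounded linear operator on `L²(S,P)` which is a
compact operator, and it is symmetric with respect to the `m_ε`-weighted pairing. -/
theorem stmt0 {D : ℕ} (S : Set (EuclideanSpace ℝ (Fin D))) (hS : IsCompact S)
    (hSne : S.Nonempty) (μ : Measure (EuclideanSpace ℝ (Fin D))) [IsProbabilityMeasure μ]
    (hμS : μ Sᶜ = 0) (ε : ℝ) (hε : 0 < ε) :
    ∃ T : Lp ℝ 2 μ →L[ℝ] Lp ℝ 2 μ,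
      (∀ f : Lp ℝ 2 μ, (T f : EuclideanSpace ℝ (Fin D) → ℝ) =ᵐ[μ] Tfun ε μ f) ∧
      IsCompactOperator T ∧
      (∀ f g : Lp ℝ 2 μ,
        ∫ x, Tfun ε μ f x * g x * mFun ε μ x ∂μ
          = ∫ x, f x * Tfun ε μ g x * mFun ε μ x ∂μ) := by
  obtain ⟨x₀, hx₀⟩ := hSne
  obtain ⟨r, hSr⟩ := hS.isBounded.subset_closedBall x₀
  set c₀ := Real.exp (-(2 * r) ^ 2 / (4 * ε ^ 2)) with hc₀def
  have hc₀ : 0 < c₀ := Real.exp_pos _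
  have hgauss : ∀ x ∈ S, ∀ y ∈ S, c₀ ≤ gaussKer ε x y := by
    intro x hx y hy
    apply gaussKer_ge hε
    have h1 := Metric.mem_closedBall.mp (hSr hx)
    have h2 := Metric.mem_closedBall.mp (hSr hy)
    have h3 := dist_triangle x x₀ y
    rw [dist_comm x₀ y] at h3
    rw [← dist_eq_norm]
    linarith
  have hc : ∀ z ∈ S, c₀ ≤ degFun ε μ z := fun z hz => le_degFun hμS (hgauss z hz)
  have hd : ∀ z, 0 < degFun ε μ z := degFun_pos hμS hε hSr
  have hmem : ∀ f : Lp ℝ 2 μ, MemLp (Tfun ε μ f) 2 μ := fun f =>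
    memℒp_Tfun hd hμS hc₀ hc (L2_integrable f)
  let L : Lp ℝ 2 μ →ₗ[ℝ] Lp ℝ 2 μ :=
    { toFun := fun f => (hmem f).toLp _
      map_add' := by
        intro f g
        have h1 : Tfun ε μ ((f + g : Lp ℝ 2 μ) : EuclideanSpace ℝ (Fin D) → ℝ)
            = Tfun ε μ f + Tfun ε μ g := by
          rw [Tfun_congr (Lp.coeFn_add f g),
            Tfun_add hd hμS hc₀ hc (L2_integrable f) (L2_integrable g)]
        rw [MemLp.toLp_congr (hmem (f + g)) ((hmem f).add (hmem g)) (by rw [h1]),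
          MemLp.toLp_add]
      map_smul' := by
        intro a f
        have h1 : Tfun ε μ ((a • f : Lp ℝ 2 μ) : EuclideanSpace ℝ (Fin D) → ℝ)
            = a • Tfun ε μ f := by
          rw [Tfun_congr (Lp.coeFn_smul a f), Tfun_smul a]
        rw [MemLp.toLp_congr (hmem (a • f)) ((hmem f).const_smul a) (by rw [h1]),
          MemLp.toLp_const_smul]
        rfl }
  have hb : ∀ f : Lp ℝ 2 μ, ‖L f‖ ≤ ((c₀ * c₀)⁻¹ / c₀) * ‖f‖ := by
    intro f
    rw [show L f = (hmem f).toLp _ from rfl, Lp.norm_toLp]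
    refine ENNReal.toReal_le_of_le_ofReal (by positivity) ?_
    refine le_trans (eLpNorm_Tfun_le hd hμS hc₀ hc (L2_integrable f)) ?_
    apply ENNReal.ofReal_le_ofReal
    have h2 := L2_int_norm_le f
    gcongr

  let T := L.mkContinuous _ hb
  have hTf : ∀ f : Lp ℝ 2 μ, (T f : EuclideanSpace ℝ (Fin D) → ℝ) =ᵐ[μ] Tfun ε μ f :=
    fun f => (hmem f).coeFn_toLp
  exact ⟨T, hTf, isCompactOperator_T hS hd hμS hc₀ hc T hTf,
    fun f g => Tfun_symm hd hμS hc₀ hc (L2_integrable f) (L2_integrable g)⟩
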